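/- Let 1 ≤ i ≤ n−1. The restriction homomorphism O(V_i) → O(V_i ∩ V_{i+1}) restricts to a bijection from the fixed subalgebra O(V_i)^{s_i} onto O(V_i ∩ V_{i+1}); likewise the restriction O(V_{i+1})^{s_{i+1}} → O(V_i ∩ V_{i+1}) is bijective. Equivalently, O(V_i ∩ V_{i+1}) is a free module of rank 1, with basis {1}, over each of O(V_i)^{s_i} and O(V_{i+1})^{s_{i+1}}. -/

import Mathlib

/-! Basic setup: type A_n geometric representation, Weyl lines, combinatorics. -/

set_option linter.unusedSectionVars false
set_option synthInstance.maxHeartbeats 1000000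
set_option maxHeartbeats 1000000

namespace TLpaper

/-- A permutation is a transposition. -/
def IsTransposition {α : Type} [DecidableEq α] (σ : Equiv.Perm α) : Prop :=
  ∃ a b, a ≠ b ∧ σ = Equiv.swap a b

variable (k : Type) [Field k] [CharZero k] (n : ℕ)

/-- The reflecting hyperplane of a permutation `t` inside `V = {x | ∑ x i = 0}`:
the set of points of `V` fixed by permuting the coordinates by `t`.  For a
transposition `t = (a b)` this is `{x ∈ V | x a = x b}`. -/
def Hyp (t : Equiv.Perm (Fin (n + 1))) : Set (Fin (n + 1) → k) :=
  {x | (∑ i, x i) = 0 ∧ ∀ i, x (t i) = x i}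

/-- A Weyl line: a one-dimensional linear subspace of `V` which is an
intersection of a (possibly empty) family of reflecting hyperplanes. -/
def IsWeylLine (L : Set (Fin (n + 1) → k)) : Prop :=
  (∃ v : Fin (n + 1) → k, v ≠ 0 ∧ L = Set.range fun c : k => c • v) ∧
  ∃ T : Set (Equiv.Perm (Fin (n + 1))),
    (∀ t ∈ T, IsTransposition t) ∧
    L = {x | (∑ i, x i) = 0} ∩ ⋂ t ∈ T, Hyp k n t

/-- `Z`: the union of all Weyl lines. -/
def ZZ : Set (Fin (n + 1) → k) := ⋃ L ∈ {L | IsWeylLine k n L}, L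

/-- `V_t`: the union of all Weyl lines transverse to `t` (i.e. not contained in `H_t`). -/
def Vt (t : Equiv.Perm (Fin (n + 1))) : Set (Fin (n + 1) → k) :=
  ⋃ L ∈ {L | IsWeylLine k n L ∧ ¬L ⊆ Hyp k n t}, L

open Fin.NatCast in
/-- The simple transposition `s_i = (i, i+1)` (0-indexed: it swaps coordinates
`i` and `i+1` of `Fin (n+1)`, for `i < n`). -/
def simple (i : ℕ) : Equiv.Perm (Fin (n + 1)) :=
  Equiv.swap (i : Fin (n + 1)) ((i + 1 : ℕ) : Fin (n + 1))

/-- `V_i := V_{s_i}`. -/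
def Vi (i : ℕ) : Set (Fin (n + 1) → k) := Vt k n (simple n i)

/-- The action of a permutation on a subset of `k^{n+1}` (permuting coordinates). -/
def permSet (σ : Equiv.Perm (Fin (n + 1))) (W : Set (Fin (n + 1) → k)) :
    Set (Fin (n + 1) → k) :=
  (fun x => x ∘ σ) '' W

/-- `i · W := V_i ∩ (W ∪ s_i (W))`. -/
def dotAct (i : ℕ) (W : Set (Fin (n + 1) → k)) : Set (Fin (n + 1) → k) :=
  Vi k n i ∩ (W ∪ permSet k n (simple n i) W)

/-- The set `W_{i_1 ⋯ i_m}` associated with a sequence of indices. -/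
def seqSet : List ℕ → Set (Fin (n + 1) → k)
  | [] => ZZ k n
  | [i] => Vi k n i
  | i :: j :: l => dotAct k n i (seqSet (j :: l))

/-- Membership in the family `𝒱_n`. -/
def memVn (W : Set (Fin (n + 1) → k)) : Prop :=
  ∃ l : List ℕ, l ≠ [] ∧ (∀ i ∈ l, i < n) ∧ W = seqSet k n l

/-- A set of pairwise commuting transpositions. -/
def CommTranspositions (Q : Set (Equiv.Perm (Fin (n + 1)))) : Prop :=
  (∀ t ∈ Q, IsTransposition t) ∧ ∀ t ∈ Q, ∀ t' ∈ Q, t * t' = t' * t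


/-! Coordinate rings of subvarieties of `k^{n+1}`. -/

noncomputable section

/-- The ring `O(X)` of regular functions on `X`: the quotient of the polynomial ring
`k[X_0, …, X_n]` by the vanishing ideal of `X`. -/
def O (X : Set (Fin (n + 1) → k)) : Type :=
  MvPolynomial (Fin (n + 1)) k ⧸ MvPolynomial.vanishingIdeal k X

instance (X : Set (Fin (n + 1) → k)) : CommRing (O k n X) :=
  inferInstanceAs (CommRing (MvPolynomial (Fin (n + 1)) k ⧸ MvPolynomial.vanishingIdeal k X))

theorem vanishingIdeal_anti {X Y : Set (Fin (n + 1) → k)} (h : X ⊆ Y) :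
    MvPolynomial.vanishingIdeal k Y ≤ MvPolynomial.vanishingIdeal k X := fun p hp => by
  rw [MvPolynomial.mem_vanishingIdeal_iff] at hp ⊢
  exact fun x hx => hp x (h hx)

/-- The (surjective) restriction homomorphism `O(Y) → O(X)` for `X ⊆ Y`. -/
def res {X Y : Set (Fin (n + 1) → k)} (h : X ⊆ Y) : O k n Y →+* O k n X :=
  Ideal.Quotient.factor (vanishingIdeal_anti k n h)

open Classical in
/-- The ring endomorphism of `O(X)` induced by a permutation `σ` of the coordinates
(when `X` is `σ`-stable; the definition branches on this (true, in our uses)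
stability condition to be total). -/
def permO (σ : Equiv.Perm (Fin (n + 1))) (X : Set (Fin (n + 1) → k)) :
    O k n X →+* O k n X :=
  if h : ∀ x ∈ X, x ∘ σ ∈ X then
    Ideal.Quotient.lift _
      ((Ideal.Quotient.mk _).comp (MvPolynomial.rename (R := k) ⇑σ).toRingHom)
      (fun p hp => by
        have hmem : (MvPolynomial.rename (R := k) ⇑σ) p ∈
            MvPolynomial.vanishingIdeal k X := by
          rw [MvPolynomial.mem_vanishingIdeal_iff]
          intro x hx
          rw [MvPolynomial.aeval_rename]
          exact (MvPolynomial.mem_vanishingIdeal_iff.1 hp) _ (h x hx)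
        exact Ideal.Quotient.eq_zero_iff_mem.2 hmem)
  else RingHom.id _

/-- The fixed subalgebra `O(V_i)^{s_i}` of `O(V_i)` under the automorphism induced
by the simple transposition `s_i`. -/
def fixedO (i : ℕ) : Subring (O k n (Vi k n i)) :=
  RingHom.eqLocus (permO k n (simple n i) (Vi k n i)) (RingHom.id _)

open Fin.NatCast in
/-- The image `f_i` of `X_i − X_{i+1}` in the coordinate ring `O(X)`. -/
def fbar (X : Set (Fin (n + 1) → k)) (i : ℕ) : O k n X :=
  Ideal.Quotient.mk _
    (MvPolynomial.X (i : Fin (n + 1)) - MvPolynomial.X ((i + 1 : ℕ) : Fin (n + 1)))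

theorem Vt_subset_ZZ (t : Equiv.Perm (Fin (n + 1))) : Vt k n t ⊆ ZZ k n := by
  refine Set.iUnion₂_subset fun L hL => ?_
  exact Set.subset_iUnion₂ (s := fun L _ => L) L hL.1

theorem Vi_subset_ZZ (i : ℕ) : Vi k n i ⊆ ZZ k n := Vt_subset_ZZ k n _

theorem seqSet_subset_ZZ : ∀ l : List ℕ, seqSet k n l ⊆ ZZ k n
  | [] => subset_rfl
  | [_] => Vi_subset_ZZ k n _
  | _ :: _ :: _ => Set.inter_subset_left.trans (Vi_subset_ZZ k n _)

end

/-! ### Auxiliary lemmas for Statement 10 -/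

open MvPolynomial

open Fin.NatCast

variable {k n}

section Geometry

lemma sum_zero_of_mem {L : Set (Fin (n + 1) → k)} (hL : IsWeylLine k n L)
    {z : Fin (n + 1) → k} (hz : z ∈ L) : (∑ j, z j) = 0 := by
  obtain ⟨-, T, -, hcap⟩ := hL
  rw [hcap] at hz
  exact hz.1

lemma exists_line_of_mem_Vt {t : Equiv.Perm (Fin (n + 1))} {x : Fin (n + 1) → k}
    (hx : x ∈ Vt k n t) :
    ∃ L, IsWeylLine k n L ∧ x ∈ L ∧ ∃ z ∈ L, ¬ (∀ j, z (t j) = z j) := by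
  obtain ⟨L, hL, hxL⟩ := Set.mem_iUnion₂.1 hx
  obtain ⟨hW, hns⟩ := hL
  rw [Set.not_subset] at hns
  obtain ⟨z, hzL, hz⟩ := hns
  exact ⟨L, hW, hxL, z, hzL, fun h => hz ⟨sum_zero_of_mem hW hzL, h⟩⟩

lemma ne_of_not_hyp {a b : Fin (n + 1)} {z : Fin (n + 1) → k}
    (h : ¬ ∀ j, z (Equiv.swap a b j) = z j) : z a ≠ z b := by
  intro he
  apply h
  intro j
  rcases eq_or_ne j a with rfl | hja
  · rw [Equiv.swap_apply_left]; exact he.symm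
  rcases eq_or_ne j b with rfl | hjb
  · rw [Equiv.swap_apply_right]; exact he
  · rw [Equiv.swap_apply_of_ne_of_ne hja hjb]

lemma line_subset_Vt {L : Set (Fin (n + 1) → k)} (hL : IsWeylLine k n L)
    {a b : Fin (n + 1)} {z : Fin (n + 1) → k} (hz : z ∈ L) (hzz : z a ≠ z b) :
    L ⊆ Vt k n (Equiv.swap a b) := by
  intro x hx
  refine Set.mem_iUnion₂.2 ⟨L, ⟨hL, fun hsub => ?_⟩, hx⟩
  have h2 := (hsub hz).2 a
  rw [Equiv.swap_apply_left] at h2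
  exact hzz h2.symm

lemma isWeylLine_image (σ : Equiv.Perm (Fin (n + 1))) {L : Set (Fin (n + 1) → k)}
    (hL : IsWeylLine k n L) : IsWeylLine k n ((fun x => x ∘ ⇑σ) '' L) := by
  obtain ⟨⟨v, hv0, hspan⟩, T, hT, hcap⟩ := hL
  constructor
  · refine ⟨v ∘ ⇑σ, ?_, ?_⟩
    · intro h
      apply hv0
      funext j
      have := congrFun h (σ.symm j)
      simpa using this
    · ext y
      constructor
      · rintro ⟨x, hx, rfl⟩
        rw [hspan] at hx
        obtain ⟨c, rfl⟩ := hx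
        exact ⟨c, rfl⟩
      · rintro ⟨c, rfl⟩
        refine ⟨c • v, by rw [hspan]; exact ⟨c, rfl⟩, ?_⟩
        funext j
        simp
  · refine ⟨(fun t => σ⁻¹ * t * σ) '' T, ?_, ?_⟩
    · rintro t' ⟨t, htT, rfl⟩
      obtain ⟨a, b, hab, rfl⟩ := hT t htT
      refine ⟨σ⁻¹ a, σ⁻¹ b, fun h => hab ?_, ?_⟩
      · have := congrArg σ h
        simpa using this
      · have h1 := Equiv.swap_apply_apply σ⁻¹ a b
        simpa using h1.symm
    · ext y
      constructor
      · rintro ⟨x, hx, rfl⟩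
        rw [hcap] at hx
        obtain ⟨hsum, hH⟩ := hx
        have hsum' : (∑ j, x (σ j)) = 0 := by
          rw [Equiv.sum_comp σ x]; exact hsum
        refine ⟨hsum', Set.mem_iInter₂.2 ?_⟩
        rintro t' ⟨t, htT, rfl⟩
        have hxt := (Set.mem_iInter₂.1 hH t htT)
        refine ⟨hsum', fun j => ?_⟩
        have h1 : (σ⁻¹ * t * σ) j = σ⁻¹ (t (σ j)) := rfl
        simp only [Function.comp_apply, h1]
        have h2 := hxt.2 (σ j)
        calc x (σ (σ⁻¹ (t (σ j)))) = x (t (σ j)) := by rw [← Equiv.Perm.mul_apply, mul_inv_cancel, Equiv.Perm.one_apply]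
        _ = x (σ j) := h2
      · intro hy
        obtain ⟨hsum, hH⟩ := hy
        refine ⟨y ∘ ⇑σ⁻¹, ?_, ?_⟩
        · rw [hcap]
          have hsum' : (∑ j, y (σ⁻¹ j)) = 0 := by
            rw [Equiv.sum_comp σ⁻¹ y]; exact hsum
          refine ⟨hsum', Set.mem_iInter₂.2 fun t htT => ⟨hsum', fun j => ?_⟩⟩
          have hyt := Set.mem_iInter₂.1 hH (σ⁻¹ * t * σ) ⟨t, htT, rfl⟩
          have h2 := hyt.2 (σ⁻¹ j)
          have h1 : (σ⁻¹ * t * σ) (σ⁻¹ j) = σ⁻¹ (t j) := by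
            simp [Equiv.Perm.mul_apply]
          rw [h1] at h2
          exact h2
        · funext j
          simp

lemma fin_cast_val {m : ℕ} (h : m < n + 1) : ((m : Fin (n + 1)) : ℕ) = m := by
  rw [Fin.val_natCast, Nat.mod_eq_of_lt h]

lemma fin_cast_ne {m l : ℕ} (hm : m < n + 1) (hl : l < n + 1) (h : m ≠ l) :
    (m : Fin (n + 1)) ≠ (l : Fin (n + 1)) := by
  intro he
  apply h
  have := congrArg (Fin.val) he
  rwa [fin_cast_val hm, fin_cast_val hl] at this

lemma Vi_stable (i : ℕ) (hi : i < n) :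
    ∀ x ∈ Vi k n i, x ∘ ⇑(simple n i) ∈ Vi k n i := by
  intro x hx
  obtain ⟨L, hW, hxL, z, hzL, hz⟩ := exists_line_of_mem_Vt (t := simple n i) hx
  have hzab : z (i : Fin (n + 1)) ≠ z ((i + 1 : ℕ) : Fin (n + 1)) := ne_of_not_hyp hz
  have hW' := isWeylLine_image (simple n i) hW
  have hxs : x ∘ ⇑(simple n i) ∈ (fun y => y ∘ ⇑(simple n i)) '' L :=
    Set.mem_image_of_mem _ hxL
  have hzs : z ∘ ⇑(simple n i) ∈ (fun y => y ∘ ⇑(simple n i)) '' L :=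
    Set.mem_image_of_mem _ hzL
  refine line_subset_Vt hW' hzs ?_ hxs
  show z (simple n i (i : Fin (n + 1))) ≠ z (simple n i ((i + 1 : ℕ) : Fin (n + 1)))
  rw [show simple n i ((i : ℕ) : Fin (n + 1)) = ((i + 1 : ℕ) : Fin (n + 1)) from
    Equiv.swap_apply_left _ _,
    show simple n i (((i + 1 : ℕ)) : Fin (n + 1)) = ((i : ℕ) : Fin (n + 1)) from
    Equiv.swap_apply_right _ _]
  exact hzab.symm

lemma mem_W_or (i : ℕ) (hi : i + 1 < n) :
    ∀ x ∈ Vi k n i, x ∈ Vi k n i ∩ Vi k n (i + 1) ∨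
      x ∘ ⇑(simple n i) ∈ Vi k n i ∩ Vi k n (i + 1) := by
  have ha : i < n + 1 := by omega
  have hb : i + 1 < n + 1 := by omega
  have hc : i + 1 + 1 < n + 1 := by omega
  have hab : (i : Fin (n + 1)) ≠ ((i + 1 : ℕ) : Fin (n + 1)) := fin_cast_ne ha hb (by omega)
  have hca : ((i + 1 + 1 : ℕ) : Fin (n + 1)) ≠ ((i : ℕ) : Fin (n + 1)) := fin_cast_ne hc ha (by omega)
  have hcb : ((i + 1 + 1 : ℕ) : Fin (n + 1)) ≠ ((i + 1 : ℕ) : Fin (n + 1)) :=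
    fin_cast_ne hc hb (by omega)
  intro x hx
  obtain ⟨L, hW, hxL, z, hzL, hz⟩ := exists_line_of_mem_Vt (t := simple n i) hx
  have hzab : z (i : Fin (n + 1)) ≠ z ((i + 1 : ℕ) : Fin (n + 1)) := ne_of_not_hyp hz
  rcases eq_or_ne (z ((i + 1 : ℕ) : Fin (n + 1))) (z ((i + 1 + 1 : ℕ) : Fin (n + 1))) with heq | hne
  · right
    have hW' := isWeylLine_image (simple n i) hW
    have hxs : x ∘ ⇑(simple n i) ∈ (fun y => y ∘ ⇑(simple n i)) '' L :=
      Set.mem_image_of_mem _ hxL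
    have hzs : z ∘ ⇑(simple n i) ∈ (fun y => y ∘ ⇑(simple n i)) '' L :=
      Set.mem_image_of_mem _ hzL
    have hva : (z ∘ ⇑(simple n i)) ((i : ℕ) : Fin (n + 1)) = z ((i + 1 : ℕ) : Fin (n + 1)) := by
      show z (simple n i _) = _
      rw [show simple n i ((i : ℕ) : Fin (n + 1)) = ((i + 1 : ℕ) : Fin (n + 1)) from
        Equiv.swap_apply_left _ _]
    have hvb : (z ∘ ⇑(simple n i)) ((i + 1 : ℕ) : Fin (n + 1)) = z ((i : ℕ) : Fin (n + 1)) := by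
      show z (simple n i _) = _
      rw [show simple n i (((i + 1 : ℕ)) : Fin (n + 1)) = ((i : ℕ) : Fin (n + 1)) from
        Equiv.swap_apply_right _ _]
    have hvc : (z ∘ ⇑(simple n i)) ((i + 1 + 1 : ℕ) : Fin (n + 1)) = z ((i + 1 + 1 : ℕ) : Fin (n + 1)) := by
      show z (simple n i _) = _
      rw [show simple n i (((i + 1 + 1 : ℕ)) : Fin (n + 1)) = ((i + 1 + 1 : ℕ) : Fin (n + 1)) from
        Equiv.swap_apply_of_ne_of_ne hca hcb]
    constructor
    · refine line_subset_Vt hW' hzs ?_ hxs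
      rw [hva, hvb]
      exact hzab.symm
    · refine line_subset_Vt hW' hzs ?_ hxs
      rw [hvb, hvc, ← heq]
      exact hzab
  · left
    exact ⟨hx, line_subset_Vt hW hzL hne hxL⟩

lemma mem_W_or' (i : ℕ) (hi : i + 1 < n) :
    ∀ x ∈ Vi k n (i + 1), x ∈ Vi k n i ∩ Vi k n (i + 1) ∨
      x ∘ ⇑(simple n (i + 1)) ∈ Vi k n i ∩ Vi k n (i + 1) := by
  have ha : i < n + 1 := by omega
  have hb : i + 1 < n + 1 := by omega
  have hc : i + 1 + 1 < n + 1 := by omega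
  have hab : (i : Fin (n + 1)) ≠ ((i + 1 : ℕ) : Fin (n + 1)) := fin_cast_ne ha hb (by omega)
  have hac : ((i : ℕ) : Fin (n + 1)) ≠ ((i + 1 + 1 : ℕ) : Fin (n + 1)) :=
    fin_cast_ne ha hc (by omega)
  have hbc : ((i + 1 : ℕ) : Fin (n + 1)) ≠ ((i + 1 + 1 : ℕ) : Fin (n + 1)) :=
    fin_cast_ne hb hc (by omega)
  intro x hx
  obtain ⟨L, hW, hxL, z, hzL, hz⟩ := exists_line_of_mem_Vt (t := simple n (i + 1)) hx
  have hzbc : z ((i + 1 : ℕ) : Fin (n + 1)) ≠ z ((i + 1 + 1 : ℕ) : Fin (n + 1)) :=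
    ne_of_not_hyp hz
  rcases eq_or_ne (z ((i : ℕ) : Fin (n + 1))) (z ((i + 1 : ℕ) : Fin (n + 1))) with heq | hne
  · right
    have hW' := isWeylLine_image (simple n (i + 1)) hW
    have hxs : x ∘ ⇑(simple n (i + 1)) ∈ (fun y => y ∘ ⇑(simple n (i + 1))) '' L :=
      Set.mem_image_of_mem _ hxL
    have hzs : z ∘ ⇑(simple n (i + 1)) ∈ (fun y => y ∘ ⇑(simple n (i + 1))) '' L :=
      Set.mem_image_of_mem _ hzL
    have hva : (z ∘ ⇑(simple n (i + 1))) ((i : ℕ) : Fin (n + 1)) = z ((i : ℕ) : Fin (n + 1)) := by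
      show z (simple n (i + 1) _) = _
      rw [show simple n (i + 1) ((i : ℕ) : Fin (n + 1)) = ((i : ℕ) : Fin (n + 1)) from
        Equiv.swap_apply_of_ne_of_ne hab hac]
    have hvb : (z ∘ ⇑(simple n (i + 1))) ((i + 1 : ℕ) : Fin (n + 1))
        = z ((i + 1 + 1 : ℕ) : Fin (n + 1)) := by
      show z (simple n (i + 1) _) = _
      rw [show simple n (i + 1) (((i + 1 : ℕ)) : Fin (n + 1)) = ((i + 1 + 1 : ℕ) : Fin (n + 1)) from
        Equiv.swap_apply_left _ _]
    have hvc : (z ∘ ⇑(simple n (i + 1))) ((i + 1 + 1 : ℕ) : Fin (n + 1))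
        = z ((i + 1 : ℕ) : Fin (n + 1)) := by
      show z (simple n (i + 1) _) = _
      rw [show simple n (i + 1) (((i + 1 + 1 : ℕ)) : Fin (n + 1)) = ((i + 1 : ℕ) : Fin (n + 1)) from
        Equiv.swap_apply_right _ _]
    constructor
    · refine line_subset_Vt hW' hzs ?_ hxs
      rw [hva, hvb, heq]
      exact hzbc
    · refine line_subset_Vt hW' hzs ?_ hxs
      rw [hvb, hvc]
      exact hzbc.symm
  · left
    exact ⟨line_subset_Vt hW hzL hne hxL, hx⟩

lemma apply_eq_of_mem_W (i : ℕ) (hi : i + 1 < n) :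
    ∀ x ∈ Vi k n i ∩ Vi k n (i + 1),
      x ((i : ℕ) : Fin (n + 1)) = x ((i + 1 + 1 : ℕ) : Fin (n + 1)) := by
  have ha : i < n + 1 := by omega
  have hb : i + 1 < n + 1 := by omega
  have hc : i + 1 + 1 < n + 1 := by omega
  intro x hx
  obtain ⟨hx1, hx2⟩ := hx
  rcases eq_or_ne x 0 with rfl | hx0
  · rfl
  obtain ⟨L, hW, hxL, z, hzL, hz⟩ := exists_line_of_mem_Vt (t := simple n i) hx1
  have hzab : z ((i : ℕ) : Fin (n + 1)) ≠ z ((i + 1 : ℕ) : Fin (n + 1)) := ne_of_not_hyp hz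
  obtain ⟨L₂, hW₂, hxL₂, w, hwL₂, hw⟩ := exists_line_of_mem_Vt (t := simple n (i + 1)) hx2
  have hwbc : w ((i + 1 : ℕ) : Fin (n + 1)) ≠ w ((i + 1 + 1 : ℕ) : Fin (n + 1)) :=
    ne_of_not_hyp hw
  obtain ⟨⟨v, hv0, hspan⟩, T, hT, hcap⟩ := hW
  obtain ⟨⟨v₂, hv20, hspan₂⟩, -⟩ := hW₂
  -- span coefficients
  have hxv : ∃ cx : k, cx • v = x := by rw [hspan] at hxL; exact hxL
  obtain ⟨cx, hcx⟩ := hxv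
  have hzv : ∃ cz : k, cz • v = z := by rw [hspan] at hzL; exact hzL
  obtain ⟨cz, hcz⟩ := hzv
  have hxv2 : ∃ dx : k, dx • v₂ = x := by rw [hspan₂] at hxL₂; exact hxL₂
  obtain ⟨dx, hdx⟩ := hxv2
  have hwv2 : ∃ dw : k, dw • v₂ = w := by rw [hspan₂] at hwL₂; exact hwL₂
  obtain ⟨dw, hdw⟩ := hwv2
  have hcx0 : cx ≠ 0 := by
    rintro rfl
    exact hx0 (by rw [← hcx, zero_smul])
  have hdx0 : dx ≠ 0 := by
    rintro rfl
    exact hx0 (by rw [← hdx, zero_smul])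
  -- x a ≠ x b
  have hxj : ∀ j, x j = cx * v j := fun j => by rw [← hcx]; rfl
  have hzj : ∀ j, z j = cz * v j := fun j => by rw [← hcz]; rfl
  have hxj2 : ∀ j, x j = dx * v₂ j := fun j => by rw [← hdx]; rfl
  have hwj : ∀ j, w j = dw * v₂ j := fun j => by rw [← hdw]; rfl
  have hvab : v ((i : ℕ) : Fin (n + 1)) ≠ v ((i + 1 : ℕ) : Fin (n + 1)) := by
    intro h
    exact hzab (by rw [hzj, hzj, h])
  have hxab : x ((i : ℕ) : Fin (n + 1)) ≠ x ((i + 1 : ℕ) : Fin (n + 1)) := by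
    intro h
    rw [hxj, hxj] at h
    exact hvab (mul_left_cancel₀ hcx0 h)
  have hv2bc : v₂ ((i + 1 : ℕ) : Fin (n + 1)) ≠ v₂ ((i + 1 + 1 : ℕ) : Fin (n + 1)) := by
    intro h
    exact hwbc (by rw [hwj, hwj, h])
  have hxbc : x ((i + 1 : ℕ) : Fin (n + 1)) ≠ x ((i + 1 + 1 : ℕ) : Fin (n + 1)) := by
    intro h
    rw [hxj2, hxj2] at h
    exact hv2bc (mul_left_cancel₀ hdx0 h)
  -- the auxiliary vector y
  set a : Fin (n + 1) := ((i : ℕ) : Fin (n + 1)) with hadef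
  set b : Fin (n + 1) := ((i + 1 : ℕ) : Fin (n + 1)) with hbdef
  set c : Fin (n + 1) := ((i + 1 + 1 : ℕ) : Fin (n + 1)) with hcdef
  set S : k := ∑ j, (x j - x b) * (x j - x c) with hSdef
  set M : k := S / ((n + 1 : ℕ) : k) with hMdef
  set y : Fin (n + 1) → k := fun j => (x j - x b) * (x j - x c) - M with hydef
  have hn0 : ((n + 1 : ℕ) : k) ≠ 0 := Nat.cast_ne_zero.mpr (Nat.succ_ne_zero n)
  have hysum : (∑ j, y j) = 0 := by
    rw [hydef]
    rw [Finset.sum_sub_distrib, Finset.sum_const, Finset.card_univ, Fintype.card_fin,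
      nsmul_eq_mul, ← hSdef, hMdef, mul_div_cancel₀ _ hn0, sub_self]
  have hconst : ∀ t ∈ T, ∀ j, x (t j) = x j := by
    intro t ht j
    rw [hcap] at hxL
    exact (Set.mem_iInter₂.1 hxL.2 t ht).2 j
  have hyL : y ∈ L := by
    rw [hcap]
    refine ⟨hysum, Set.mem_iInter₂.2 fun t ht => ⟨hysum, fun j => ?_⟩⟩
    show (x (t j) - x b) * (x (t j) - x c) - M = (x j - x b) * (x j - x c) - M
    rw [hconst t ht j]
  have hyv : ∃ e : k, e • v = y := by rw [hspan] at hyL; exact hyL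
  obtain ⟨e, he⟩ := hyv
  have hyj : ∀ j, y j = e * v j := fun j => by rw [← he]; rfl
  have hcross : ∀ j m, y j * x m = y m * x j := by
    intro j m
    rw [hyj, hyj, hxj, hxj]
    ring
  have hyb : y b = -M := by
    show (x b - x b) * (x b - x c) - M = -M
    ring
  have hyc : y c = -M := by
    show (x c - x b) * (x c - x c) - M = -M
    ring
  have hM0 : M = 0 := by
    have h1 := hcross b c
    rw [hyb, hyc] at h1
    have h2 : M * (x b - x c) = 0 := by linear_combination h1
    rcases mul_eq_zero.1 h2 with h | h
    · exact h
    · exact absurd (sub_eq_zero.1 h) hxbc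
  have hya : y a = 0 := by
    rcases eq_or_ne (x b) 0 with hb0 | hb0
    · have hc0 : x c ≠ 0 := fun h => hxbc (by rw [hb0, h])
      have h1 := hcross a c
      rw [hyc, hM0, neg_zero, zero_mul] at h1
      rcases mul_eq_zero.1 h1 with h | h
      · exact h
      · exact absurd h hc0
    · have h1 := hcross a b
      rw [hyb, hM0, neg_zero, zero_mul] at h1
      rcases mul_eq_zero.1 h1 with h | h
      · exact h
      · exact absurd h hb0
  have h2 : (x a - x b) * (x a - x c) = 0 := by
    have := hya
    rw [hydef] at this
    simpa [hM0] using this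
  rcases mul_eq_zero.1 h2 with h | h
  · exact absurd (sub_eq_zero.1 h) hxab
  · exact sub_eq_zero.1 h

end Geometry

section Algebra

lemma dvd_sub_rename_collapse (a b : Fin (n + 1)) (q : MvPolynomial (Fin (n + 1)) k) :
    (X a - X b) ∣ (q - rename (fun j => if j = b then a else j) q) := by
  induction q using MvPolynomial.induction_on with
  | C c => simp
  | add p q hp hq =>
      have h := dvd_add hp hq
      have he : p + q - rename (fun j => if j = b then a else j) (p + q)
          = (p - rename (fun j => if j = b then a else j) p)
            + (q - rename (fun j => if j = b then a else j) q) := by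
        rw [map_add]; ring
      rw [he]; exact h
  | mul_X p j hp =>
      have hg : rename (fun j => if j = b then a else j) (p * X j)
          = rename (fun j => if j = b then a else j) p * X (if j = b then a else j) := by
        rw [map_mul, rename_X]
      have h2 : (X a - X b : MvPolynomial (Fin (n + 1)) k)
          ∣ (X j - X (if j = b then a else j)) := by
        rcases eq_or_ne j b with rfl | hj
        · rw [if_pos rfl]
          exact ⟨-1, by ring⟩
        · rw [if_neg hj, sub_self]
          exact dvd_zero _
      have h := dvd_add (hp.mul_right (X (if j = b then a else j))) (h2.mul_left p)
      have he : p * X j - rename (fun j => if j = b then a else j) (p * X j)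
          = (p - rename (fun j => if j = b then a else j) p) * X (if j = b then a else j)
            + p * (X j - X (if j = b then a else j)) := by
        rw [hg]; ring
      rw [he]; exact h

lemma exists_quotient_of_antisym {a b : Fin (n + 1)} (hab : a ≠ b)
    {q : MvPolynomial (Fin (n + 1)) k}
    (hq : rename (⇑(Equiv.swap a b)) q = -q) :
    ∃ r, q = (X a - X b) * r ∧ rename (⇑(Equiv.swap a b)) r = r := by
  have hgs : (fun j => if j = b then a else j) ∘ ⇑(Equiv.swap a b)
      = (fun j => if j = b then a else j) := by
    funext j
    rcases eq_or_ne j a with rfl | hja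
    · simp [Equiv.swap_apply_left, hab, hab.symm]
    rcases eq_or_ne j b with rfl | hjb
    · simp [Equiv.swap_apply_right, hab, hab.symm]
    · simp [Equiv.swap_apply_of_ne_of_ne hja hjb, hjb]
  have h0 : rename (fun j => if j = b then a else j) q = 0 := by
    have h1 : rename (fun j => if j = b then a else j) (rename (⇑(Equiv.swap a b)) q)
        = rename (fun j => if j = b then a else j) q := by
      rw [rename_rename, hgs]
    rw [hq, map_neg] at h1
    have h2 : rename (fun j => if j = b then a else j) q
        + rename (fun j => if j = b then a else j) q = 0 := by
      linear_combination -h1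
    exact add_self_eq_zero.1 h2
  obtain ⟨r, hr⟩ := dvd_sub_rename_collapse a b q
  rw [h0, sub_zero] at hr
  refine ⟨r, hr, ?_⟩
  have hXne : (X a - X b : MvPolynomial (Fin (n + 1)) k) ≠ 0 := by
    intro h
    exact hab (MvPolynomial.X_injective (sub_eq_zero.1 h))
  have h3 : rename (⇑(Equiv.swap a b)) ((X a - X b : MvPolynomial (Fin (n + 1)) k))
      = X b - X a := by
    rw [map_sub, rename_X, rename_X, Equiv.swap_apply_left, Equiv.swap_apply_right]
  have h4 : (X b - X a : MvPolynomial (Fin (n + 1)) k) * rename (⇑(Equiv.swap a b)) r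
      = (X b - X a) * r := by
    have h5 := hq
    rw [hr, map_mul, h3] at h5
    have h6 : -((X a - X b) * r) = (X b - X a) * r := by ring
    exact h5.trans h6
  have hXne' : (X b - X a : MvPolynomial (Fin (n + 1)) k) ≠ 0 := by
    intro h
    exact hab (MvPolynomial.X_injective (sub_eq_zero.1 h)).symm
  exact mul_left_cancel₀ hXne' h4

end Algebra

section Main

lemma permO_mk {Vs : Set (Fin (n + 1) → k)} {σ : Equiv.Perm (Fin (n + 1))}
    (hstab : ∀ x ∈ Vs, x ∘ ⇑σ ∈ Vs) (p : MvPolynomial (Fin (n + 1)) k) :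
    permO k n σ Vs (Ideal.Quotient.mk (vanishingIdeal k Vs) p)
      = Ideal.Quotient.mk (vanishingIdeal k Vs) (rename (⇑σ) p) := by
  rw [permO]
  erw [dif_pos hstab]
  rfl

lemma res_mk {Ws Vs : Set (Fin (n + 1) → k)} (hWV : Ws ⊆ Vs)
    (p : MvPolynomial (Fin (n + 1)) k) :
    res k n hWV (Ideal.Quotient.mk (vanishingIdeal k Vs) p)
      = Ideal.Quotient.mk (vanishingIdeal k Ws) p :=
  Ideal.Quotient.factor_mk _ p

lemma bijective_res_aux (Ws Vs : Set (Fin (n + 1) → k)) (σ : Equiv.Perm (Fin (n + 1)))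
    (a b : Fin (n + 1)) (hab : a ≠ b) (hsab : σ = Equiv.swap a b)
    (hWV : Ws ⊆ Vs)
    (hstab : ∀ x ∈ Vs, x ∘ ⇑σ ∈ Vs)
    (hsplit : ∀ x ∈ Vs, x ∈ Ws ∨ x ∘ ⇑σ ∈ Ws)
    (u : MvPolynomial (Fin (n + 1)) k)
    (hu : rename (⇑σ) u = u)
    (huf : u - (X a - X b) ∈ vanishingIdeal k Ws) :
    Function.Bijective ((res k n hWV).comp
      (RingHom.eqLocus (permO k n σ Vs) (RingHom.id (O k n Vs))).subtype) := by
  constructor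
  · rw [injective_iff_map_eq_zero]
    rintro ⟨g, hg⟩ h0
    obtain ⟨p, hp⟩ := Ideal.Quotient.mk_surjective (I := vanishingIdeal k Vs) g
    have hfix : rename (⇑σ) p - p ∈ vanishingIdeal k Vs := by
      have hg' : permO k n σ Vs g = g := hg
      rw [← hp, permO_mk hstab] at hg'
      exact (Ideal.Quotient.mk_eq_mk_iff_sub_mem _ _).1 hg'
    have h0' : res k n hWV g = 0 := h0
    rw [← hp] at h0'
    have h0'' : Ideal.Quotient.mk (vanishingIdeal k Ws) p = 0 := by
      rw [← res_mk hWV p]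
      exact h0'
    have hpW : p ∈ vanishingIdeal k Ws := Ideal.Quotient.eq_zero_iff_mem.1 h0''
    have hpV : p ∈ vanishingIdeal k Vs := by
      rw [mem_vanishingIdeal_iff]
      intro x hx
      rcases hsplit x hx with hxW | hxW
      · exact (mem_vanishingIdeal_iff.1 hpW) x hxW
      · have h1 : aeval x (rename (⇑σ) p - p) = 0 :=
          (mem_vanishingIdeal_iff.1 hfix) x hx
        have h2 : aeval x (rename (⇑σ) p) = 0 := by
          rw [aeval_rename]
          exact (mem_vanishingIdeal_iff.1 hpW) _ hxW
        rw [map_sub, h2, zero_sub, neg_eq_zero] at h1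
        exact h1
    apply Subtype.ext
    show g = 0
    rw [← hp]
    exact Ideal.Quotient.eq_zero_iff_mem.2 hpV
  · intro qbar
    obtain ⟨q, hq⟩ := Ideal.Quotient.mk_surjective (I := vanishingIdeal k Ws) qbar
    have hss : ⇑σ ∘ ⇑σ = id := by
      funext j
      rw [hsab]
      simp [Equiv.swap_apply_self]
    have hanti : rename (⇑σ) (q - rename (⇑σ) q) = -(q - rename (⇑σ) q) := by
      rw [map_sub, rename_rename, hss, rename_id, AlgHom.id_apply]
      ring
    rw [hsab] at hanti
    obtain ⟨r, hr, hrinv⟩ := exists_quotient_of_antisym hab hanti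
    rw [← hsab] at hr hrinv
    set p : MvPolynomial (Fin (n + 1)) k := C (2⁻¹ : k) * (q + rename (⇑σ) q + u * r)
      with hpdef
    have hps : rename (⇑σ) p = p := by
      rw [hpdef]
      simp only [map_mul, map_add, rename_C, rename_rename, hss, rename_id, AlgHom.id_apply, hu, hrinv]
      ring
    have hpfix : Ideal.Quotient.mk (vanishingIdeal k Vs) p
        ∈ RingHom.eqLocus (permO k n σ Vs) (RingHom.id (O k n Vs)) := by
      show permO k n σ Vs _ = _
      rw [permO_mk hstab, hps]
      rfl
    have h2' : (C (2⁻¹ : k) : MvPolynomial (Fin (n + 1)) k) * 2 = 1 := by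
      have h2c : (2 : MvPolynomial (Fin (n + 1)) k) = C (2 : k) :=
        (map_ofNat (C : k →+* MvPolynomial (Fin (n + 1)) k) 2).symm
      rw [h2c, ← C_mul, show (2⁻¹ * 2 : k) = 1 by norm_num, C_1]
    have hkey : p - q = C (2⁻¹ : k) * ((u - (X a - X b)) * r) := by
      rw [hpdef]
      linear_combination (-(C (2⁻¹ : k))) * hr + q * h2'
    have hpq : p - q ∈ vanishingIdeal k Ws := by
      rw [hkey]
      exact Ideal.mul_mem_left _ _ (Ideal.mul_mem_right _ _ huf)
    refine ⟨⟨Ideal.Quotient.mk (vanishingIdeal k Vs) p, hpfix⟩, ?_⟩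
    show res k n hWV (Ideal.Quotient.mk (vanishingIdeal k Vs) p) = qbar
    rw [res_mk hWV p, ← hq]
    exact (Ideal.Quotient.mk_eq_mk_iff_sub_mem _ _).2 hpq

end Main

/-- (0-indexed, `i + 1 < n`.)  The restriction homomorphism
`O(V_i) → O(V_i ∩ V_{i+1})` restricts to a bijection from `O(V_i)^{s_i}` onto
`O(V_i ∩ V_{i+1})`; likewise `O(V_{i+1})^{s_{i+1}} → O(V_i ∩ V_{i+1})` is bijective. -/
theorem res_fixed_bijective_adjacent (i : ℕ) (hi : i + 1 < n) :
    Function.Bijective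
      ((res k n (Set.inter_subset_left : Vi k n i ∩ Vi k n (i + 1) ⊆ Vi k n i)).comp
        (fixedO k n i).subtype) ∧
    Function.Bijective
      ((res k n (Set.inter_subset_right :
          Vi k n i ∩ Vi k n (i + 1) ⊆ Vi k n (i + 1))).comp
        (fixedO k n (i + 1)).subtype) := by
  have ha : i < n + 1 := by omega
  have hb : i + 1 < n + 1 := by omega
  have hc : i + 1 + 1 < n + 1 := by omega
  have hab : ((i : ℕ) : Fin (n + 1)) ≠ ((i + 1 : ℕ) : Fin (n + 1)) :=
    fin_cast_ne ha hb (by omega)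
  have hbc : ((i + 1 : ℕ) : Fin (n + 1)) ≠ ((i + 1 + 1 : ℕ) : Fin (n + 1)) :=
    fin_cast_ne hb hc (by omega)
  have hca : ((i + 1 + 1 : ℕ) : Fin (n + 1)) ≠ ((i : ℕ) : Fin (n + 1)) :=
    fin_cast_ne hc ha (by omega)
  constructor
  · refine bijective_res_aux (Vi k n i ∩ Vi k n (i + 1)) (Vi k n i) (simple n i)
      ((i : ℕ) : Fin (n + 1)) ((i + 1 : ℕ) : Fin (n + 1)) hab rfl
      Set.inter_subset_left (Vi_stable i (by omega)) (mem_W_or i hi)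
      (MvPolynomial.X ((i + 1 + 1 : ℕ) : Fin (n + 1))
        + MvPolynomial.X ((i + 1 + 1 : ℕ) : Fin (n + 1))
        - MvPolynomial.X ((i : ℕ) : Fin (n + 1))
        - MvPolynomial.X ((i + 1 : ℕ) : Fin (n + 1))) ?_ ?_
    · simp only [map_sub, map_add, MvPolynomial.rename_X]
      rw [show (simple n i) ((i + 1 + 1 : ℕ) : Fin (n + 1)) = ((i + 1 + 1 : ℕ) : Fin (n + 1)) from
          Equiv.swap_apply_of_ne_of_ne hca hbc.symm,
        show (simple n i) ((i : ℕ) : Fin (n + 1)) = ((i + 1 : ℕ) : Fin (n + 1)) from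
          Equiv.swap_apply_left _ _,
        show (simple n i) ((i + 1 : ℕ) : Fin (n + 1)) = ((i : ℕ) : Fin (n + 1)) from
          Equiv.swap_apply_right _ _]
      ring
    · rw [MvPolynomial.mem_vanishingIdeal_iff]
      intro x hx
      have h := apply_eq_of_mem_W i hi x hx
      simp only [map_sub, map_add, MvPolynomial.aeval_X]
      linear_combination (-2 : k) * h
  · refine bijective_res_aux (Vi k n i ∩ Vi k n (i + 1)) (Vi k n (i + 1)) (simple n (i + 1))
      ((i + 1 : ℕ) : Fin (n + 1)) ((i + 1 + 1 : ℕ) : Fin (n + 1)) hbc rfl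
      Set.inter_subset_right (Vi_stable (i + 1) hi) (mem_W_or' i hi)
      (MvPolynomial.X ((i + 1 : ℕ) : Fin (n + 1))
        + MvPolynomial.X ((i + 1 + 1 : ℕ) : Fin (n + 1))
        - MvPolynomial.X ((i : ℕ) : Fin (n + 1))
        - MvPolynomial.X ((i : ℕ) : Fin (n + 1))) ?_ ?_
    · simp only [map_sub, map_add, MvPolynomial.rename_X]
      rw [show (simple n (i + 1)) ((i : ℕ) : Fin (n + 1)) = ((i : ℕ) : Fin (n + 1)) from
          Equiv.swap_apply_of_ne_of_ne hab hca.symm,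
        show (simple n (i + 1)) ((i + 1 : ℕ) : Fin (n + 1)) = ((i + 1 + 1 : ℕ) : Fin (n + 1)) from
          Equiv.swap_apply_left _ _,
        show (simple n (i + 1)) ((i + 1 + 1 : ℕ) : Fin (n + 1)) = ((i + 1 : ℕ) : Fin (n + 1)) from
          Equiv.swap_apply_right _ _]
      ring
    · rw [MvPolynomial.mem_vanishingIdeal_iff]
      intro x hx
      have h := apply_eq_of_mem_W i hi x hx
      simp only [map_sub, map_add, MvPolynomial.aeval_X]
      linear_combination (-2 : k) * h


end TLpaper
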